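/- Let H be a graph, U ⊆ V(H) an independent set in H, and n a positive integer. Let Hⁿ be the graph obtained by taking n disjoint copies of H and identifying the corresponding vertices of U (so Hⁿ has n|H| − (n−1)|U| vertices). Then for every graphon W, t(Hⁿ,W) ≥ t(H,W)ⁿ. -/

import Mathlib

open MeasureTheory

noncomputable section

/-- The Lebesgue measure restricted to `[0,1]`. -/
abbrev muI : Measure ℝ := volume.restrict (Set.Icc 0 1)

/-- A graphon: a symmetric measurable function `[0,1]² → [0,1]`
(represented as a function on `ℝ²`). -/
def IsGraphon (W : ℝ → ℝ → ℝ) : Prop :=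
  Measurable (Function.uncurry W) ∧ (∀ x y, W x y = W y x) ∧
    (∀ x y, W x y ∈ Set.Icc (0:ℝ) 1)

/-- The edges of a graph on `Fin m`, each listed once as an ordered pair. -/
def edgeFinset' {m : ℕ} (G : SimpleGraph (Fin m)) [DecidableRel G.Adj] :
    Finset (Fin m × Fin m) :=
  Finset.univ.filter fun p => p.1 < p.2 ∧ G.Adj p.1 p.2

/-- The number of edges of `G`. -/
def edgeCount {m : ℕ} (G : SimpleGraph (Fin m)) [DecidableRel G.Adj] : ℕ :=
  (edgeFinset' G).card

/-- The homomorphism density `t(G, W)`. -/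
def homDensity {m : ℕ} (G : SimpleGraph (Fin m)) [DecidableRel G.Adj]
    (W : ℝ → ℝ → ℝ) : ℝ :=
  ∫ x : Fin m → ℝ, ∏ p ∈ edgeFinset' G, W (x p.1) (x p.2)
    ∂(Measure.pi fun _ => muI)

/-- The single-edge graph `K₂`. -/
abbrev K2 : SimpleGraph (Fin 2) := ⊤

/-- The complete bipartite graph `K_{a,b}` on `Fin (a+b)`. -/
def bip (a b : ℕ) : SimpleGraph (Fin (a + b)) where
  Adj i j := (decide (i.val < a)) ≠ (decide (j.val < a))
  symm := ⟨fun _ _ h => h.symm⟩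
  loopless := ⟨fun _ h => h rfl⟩

instance (a b : ℕ) : DecidableRel (bip a b).Adj :=
  fun i j => inferInstanceAs (Decidable (_ ≠ _))

/-- The cycle `C_n` on `Fin n` (for `n ≥ 3`). -/
def cyc (n : ℕ) : SimpleGraph (Fin n) where
  Adj i j := i ≠ j ∧ ((i.val + 1) % n = j.val ∨ (j.val + 1) % n = i.val)
  symm := ⟨fun _ _ h => ⟨h.1.symm, h.2.symm⟩⟩
  loopless := ⟨fun _ h => h.1 rfl⟩

instance (n : ℕ) : DecidableRel (cyc n).Adj :=
  fun i j => inferInstanceAs (Decidable (_ ∧ _))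

set_option maxHeartbeats 2000000

/-! ### Auxiliary material for the proof -/

namespace ReflectionAux

lemma isProb_muI : IsProbabilityMeasure muI :=
  ⟨by simp [Real.volume_Icc]⟩

/-- Integrability of a measurable function with values in `[0,1]` on a finite
measure space. -/
lemma integrable_bdd {α : Type*} [MeasurableSpace α] {μ : Measure α} [IsFiniteMeasure μ]
    {f : α → ℝ} (hf : AEStronglyMeasurable f μ) (h0 : ∀ x, 0 ≤ f x) (h1 : ∀ x, f x ≤ 1) :
    Integrable f μ :=
  Integrable.mono' (integrable_const 1) hf
    (Filter.Eventually.of_forall fun x => by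
      rw [Real.norm_eq_abs, abs_of_nonneg (h0 x)]; exact h1 x)

/-- The currying measurable equivalence `((ι × κ) → α) ≃ᵐ (ι → κ → α)`. -/
def curryMEquiv (ι κ α : Type*) [MeasurableSpace α] : ((ι × κ) → α) ≃ᵐ (ι → κ → α) where
  toEquiv := Equiv.curry ι κ α
  measurable_toFun := measurable_pi_lambda _ fun c => measurable_pi_lambda _ fun i =>
    measurable_pi_apply (c, i)
  measurable_invFun := measurable_pi_lambda _ fun p =>
    (measurable_pi_apply p.2).comp (measurable_pi_apply p.1)

lemma curryMEquiv_symm_apply {ι κ α : Type*} [MeasurableSpace α]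
    (x : ι → κ → α) (p : ι × κ) : (curryMEquiv ι κ α).symm x p = x p.1 p.2 := rfl

/-- Currying is measure preserving for product measures. -/
lemma measurePreserving_curry {ι κ : Type*} [Fintype ι] [Fintype κ] {α : Type*}
    [MeasurableSpace α] (μ : Measure α) [SigmaFinite μ] :
    MeasurePreserving (curryMEquiv ι κ α) (Measure.pi fun _ => μ)
      (Measure.pi fun _ : ι => Measure.pi fun _ : κ => μ) := by
  have huncurry : MeasurePreserving (curryMEquiv ι κ α).symm
      (Measure.pi fun _ : ι => Measure.pi fun _ : κ => μ) (Measure.pi fun _ => μ) := by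
    refine ⟨(curryMEquiv ι κ α).symm.measurable, ?_⟩
    refine (Measure.pi_eq (μ := fun _ : ι × κ => μ) fun s hs => ?_).symm
    rw [MeasurableEquiv.map_apply]
    have hpre : (curryMEquiv ι κ α).symm ⁻¹' Set.pi Set.univ s
        = Set.pi Set.univ (fun c => Set.pi Set.univ fun i => s (c, i)) := by
      ext z
      simp only [Set.mem_preimage, Set.mem_pi, Set.mem_univ, true_imp_iff]
      constructor
      · intro h c i; exact h (c, i)
      · intro h p; exact h p.1 p.2
    rw [hpre, Measure.pi_pi]
    simp_rw [Measure.pi_pi]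
    rw [Fintype.prod_prod_type]
  exact (MeasurePreserving.symm _ huncurry)

/-- Integral of a product of a fixed function over iid coordinates. -/
lemma integral_pi_pow {E : Type*} [MeasurableSpace E] (ν : Measure E) [SigmaFinite ν]
    (n : ℕ) (g : E → ℝ) :
    ∫ x : Fin n → E, ∏ c, g (x c) ∂(Measure.pi fun _ => ν) = (∫ y, g y ∂ν) ^ n := by
  letI : MeasureSpace E := ⟨ν⟩
  haveI : SigmaFinite (volume : Measure E) := ‹SigmaFinite ν›
  have h := MeasureTheory.integral_fintype_prod_eq_pow (𝕜 := ℝ) (ι := Fin n) (μ := ν) g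
  simpa [Fintype.card_fin] using h

end ReflectionAux

/-- reflecting a graph `H` along an independent set `U`, i.e. taking
`n` copies of `H` glued along `U` (the graph `G` below, described axiomatically
by the gluing maps `φ`), satisfies `t(Hⁿ,W) ≥ t(H,W)ⁿ`. -/
theorem reflection_density {m M : ℕ} (H : SimpleGraph (Fin m)) [DecidableRel H.Adj]
    (G : SimpleGraph (Fin M)) [DecidableRel G.Adj]
    (U : Finset (Fin m)) (hUind : ∀ i ∈ U, ∀ j ∈ U, ¬ H.Adj i j)
    (n : ℕ) (hn : 1 ≤ n)
    (φ : Fin n → Fin m → Fin M)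
    (hinj : ∀ c, Function.Injective (φ c))
    (hagree : ∀ c c' : Fin n, ∀ i ∈ U, φ c i = φ c' i)
    (hdisj : ∀ c c' : Fin n, c ≠ c' → ∀ i j : Fin m, i ∉ U → j ∉ U → φ c i ≠ φ c' j)
    (hcover : ∀ v : Fin M, ∃ c i, φ c i = v)
    (hadj : ∀ a b : Fin M, G.Adj a b ↔
      ∃ c : Fin n, ∃ i j : Fin m, H.Adj i j ∧ a = φ c i ∧ b = φ c j)
    (W : ℝ → ℝ → ℝ) (hW : IsGraphon W) :
    homDensity H W ^ n ≤ homDensity G W := by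
  classical
  obtain ⟨hWm, hWs, hWb⟩ := hW
  haveI : IsProbabilityMeasure muI := ReflectionAux.isProb_muI
  -- key injectivity lemma
  have keylem : ∀ (c c' : Fin n) (a b : Fin m), φ c a = φ c' b → a = b ∧ (a ∈ U ∨ c = c') := by
    intro c c' a b hab
    by_cases hcc : c = c'
    · subst hcc; exact ⟨hinj c hab, Or.inr rfl⟩
    · by_cases haU : a ∈ U
      · have h1 : φ c' a = φ c' b := (hagree c c' a haU).symm.trans hab
        exact ⟨hinj c' h1, Or.inl haU⟩
      · by_cases hbU : b ∈ U
        · have h1 : φ c a = φ c b := hab.trans (hagree c c' b hbU).symm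
          have h2 : a = b := hinj c h1
          exact absurd (h2 ▸ hbU) haU
        · exact absurd hab (hdisj c c' hcc a b haU hbU)
  have c0 : Fin n := ⟨0, hn⟩
  set pV : Fin M → Prop := fun v => ∃ i, i ∈ U ∧ φ c0 i = v with hpVdef
  have pV_phi : ∀ (c : Fin n) (i : Fin m), pV (φ c i) ↔ i ∈ U := by
    intro c i
    constructor
    · rintro ⟨i', hi', he⟩
      obtain ⟨rfl, -⟩ := keylem c0 c i' i he
      exact hi'
    · intro hi; exact ⟨i, hi, hagree c0 c i hi⟩
  -- the two vertex equivalences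
  have hσbij : Function.Bijective
      (fun i : {i : Fin m // i ∈ U} => (⟨φ c0 i.1, (pV_phi c0 i.1).mpr i.2⟩ : {v // pV v})) := by
    constructor
    · intro a b hab
      exact Subtype.ext (hinj c0 (congrArg Subtype.val hab))
    · rintro ⟨v, i, hi, hv⟩
      exact ⟨⟨i, hi⟩, Subtype.ext hv⟩
  set σ : {i : Fin m // i ∈ U} ≃ {v // pV v} := Equiv.ofBijective _ hσbij with hσdef
  have hσval : ∀ i : {i : Fin m // i ∈ U}, (σ i : Fin M) = φ c0 i.1 := fun i => rfl
  have hτbij : Function.Bijective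
      (fun q : Fin n × {i : Fin m // i ∉ U} =>
        (⟨φ q.1 q.2.1, fun h => q.2.2 ((pV_phi q.1 q.2.1).mp h)⟩ : {v // ¬ pV v})) := by
    constructor
    · rintro ⟨c, i, hi⟩ ⟨c', i', hi'⟩ hq
      have he : φ c i = φ c' i' := congrArg Subtype.val hq
      obtain ⟨rfl, hor⟩ := keylem c c' i i' he
      rcases hor with h | rfl
      · exact absurd h hi
      · rfl
    · rintro ⟨v, hv⟩
      obtain ⟨c, i, rfl⟩ := hcover v
      have hi : i ∉ U := fun h => hv ((pV_phi c i).mpr h)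
      exact ⟨(c, ⟨i, hi⟩), rfl⟩
  set τ : Fin n × {i : Fin m // i ∉ U} ≃ {v // ¬ pV v} := Equiv.ofBijective _ hτbij with hτdef
  have hτval : ∀ q : Fin n × {i : Fin m // i ∉ U}, (τ q : Fin M) = φ q.1 q.2.1 := fun q => rfl
  -- the measures
  set νS : Measure ({i : Fin m // i ∈ U} → ℝ) := Measure.pi fun _ => muI with hνS
  set νT : Measure ({i : Fin m // i ∉ U} → ℝ) := Measure.pi fun _ => muI with hνT
  haveI : IsProbabilityMeasure νS := Measure.pi.instIsProbabilityMeasure _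
  haveI : IsProbabilityMeasure νT := Measure.pi.instIsProbabilityMeasure _
  -- the gluing function and the kernel
  set glue : ({i : Fin m // i ∈ U} → ℝ) → ({i : Fin m // i ∉ U} → ℝ) → (Fin m → ℝ) :=
    fun u t i => if h : i ∈ U then u ⟨i, h⟩ else t ⟨i, h⟩ with hglue
  have hgluem : Measurable
      (fun z : ({i : Fin m // i ∈ U} → ℝ) × ({i : Fin m // i ∉ U} → ℝ) => glue z.1 z.2) := by
    apply measurable_pi_lambda
    intro i
    by_cases h : i ∈ U
    · simp only [hglue, dif_pos h]
      exact (measurable_pi_apply _).comp measurable_fst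
    · simp only [hglue, dif_neg h]
      exact (measurable_pi_apply _).comp measurable_snd
  set ψ : ({i : Fin m // i ∈ U} → ℝ) × ({i : Fin m // i ∉ U} → ℝ) → ℝ :=
    fun z => ∏ p ∈ edgeFinset' H, W (glue z.1 z.2 p.1) (glue z.1 z.2 p.2) with hψ
  have hψm : Measurable ψ := by
    apply Finset.measurable_prod
    intro p _
    exact hWm.comp (((measurable_pi_apply p.1).comp hgluem).prodMk
      ((measurable_pi_apply p.2).comp hgluem))
  have hψ0 : ∀ z, 0 ≤ ψ z := fun z =>
    Finset.prod_nonneg fun p _ => (hWb _ _).1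
  have hψ1 : ∀ z, ψ z ≤ 1 := fun z =>
    Finset.prod_le_one (fun p _ => (hWb _ _).1) (fun p _ => (hWb _ _).2)
  set F : ({i : Fin m // i ∈ U} → ℝ) → ℝ := fun u => ∫ t, ψ (u, t) ∂νT with hF
  have hFm : StronglyMeasurable F := hψm.stronglyMeasurable.integral_prod_right'
  have hF0 : ∀ u, 0 ≤ F u := fun u => integral_nonneg fun t => hψ0 _
  have hF1 : ∀ u, F u ≤ 1 := by
    intro u
    have : F u ≤ ∫ _t, (1 : ℝ) ∂νT := by
      apply integral_mono
      · exact ReflectionAux.integrable_bdd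
          (hψm.comp measurable_prodMk_left).aestronglyMeasurable
          (fun t => hψ0 _) (fun t => hψ1 _)
      · exact integrable_const 1
      · exact fun t => hψ1 _
    simpa using this
  -- Step A : homDensity H W = ∫ F
  have stepA : homDensity H W = ∫ u, F u ∂νS := by
    rw [homDensity]
    have mp1 := measurePreserving_piEquivPiSubtypeProd (fun _ : Fin m => muI)
      (fun i : Fin m => i ∈ U)
    rw [← (mp1.symm _).integral_comp']
    have hpt : ∀ z : ({i : Fin m // i ∈ U} → ℝ) × ({i : Fin m // i ∉ U} → ℝ),
        (∏ p ∈ edgeFinset' H,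
          W (((MeasurableEquiv.piEquivPiSubtypeProd (fun _ : Fin m => ℝ)
                (fun i : Fin m => i ∈ U)).symm z) p.1)
            (((MeasurableEquiv.piEquivPiSubtypeProd (fun _ : Fin m => ℝ)
                (fun i : Fin m => i ∈ U)).symm z) p.2)) = ψ z := by
      intro z
      rfl
    simp_rw [hpt]
    rw [MeasureTheory.integral_prod _
      (ReflectionAux.integrable_bdd hψm.aestronglyMeasurable hψ0 hψ1)]
    simp only [hF, hνT, hνS]
    congr!
  -- the product decomposition of the integrand of G
  have prodlem : ∀ y : Fin M → ℝ,
      (∏ p ∈ edgeFinset' G, W (y p.1) (y p.2)) =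
        ∏ c : Fin n, ∏ p ∈ edgeFinset' H, W (y (φ c p.1)) (y (φ c p.2)) := by
    intro y
    rw [← Finset.prod_product']
    refine (Finset.prod_bij
      (fun z _ => if φ z.1 z.2.1 < φ z.1 z.2.2 then (φ z.1 z.2.1, φ z.1 z.2.2)
        else (φ z.1 z.2.2, φ z.1 z.2.1)) ?_ ?_ ?_ ?_).symm
    · rintro ⟨c, i, j⟩ hz
      simp only [edgeFinset', Finset.mem_product, Finset.mem_filter, Finset.mem_univ, true_and] at hz
      obtain ⟨hij, hadjH⟩ := hz
      have hne : φ c i ≠ φ c j := fun h => (hadjH.ne) (hinj c h)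
      have hGadj : G.Adj (φ c i) (φ c j) := (hadj _ _).mpr ⟨c, i, j, hadjH, rfl, rfl⟩
      simp only [edgeFinset', Finset.mem_filter, Finset.mem_univ, true_and]
      by_cases hlt : φ c i < φ c j
      · simp only [if_pos hlt]
        exact ⟨hlt, hGadj⟩
      · simp only [if_neg hlt]
        exact ⟨lt_of_le_of_ne (not_lt.mp hlt) hne.symm, hGadj.symm⟩
    · rintro ⟨c, i, j⟩ hz ⟨c', i', j'⟩ hz' heq
      simp only [edgeFinset', Finset.mem_product, Finset.mem_filter, Finset.mem_univ, true_and] at hz hz'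
      obtain ⟨hij, hadjH⟩ := hz
      obtain ⟨hij', hadjH'⟩ := hz'
      dsimp only at heq
      have hcases : (φ c i = φ c' i' ∧ φ c j = φ c' j') ∨
          (φ c i = φ c' j' ∧ φ c j = φ c' i') := by
        by_cases h1 : φ c i < φ c j
        · by_cases h2 : φ c' i' < φ c' j'
          · rw [if_pos h1, if_pos h2] at heq
            exact Or.inl ⟨congrArg Prod.fst heq, congrArg Prod.snd heq⟩
          · rw [if_pos h1, if_neg h2] at heq
            exact Or.inr ⟨congrArg Prod.fst heq, congrArg Prod.snd heq⟩
        · by_cases h2 : φ c' i' < φ c' j'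
          · rw [if_neg h1, if_pos h2] at heq
            exact Or.inr ⟨congrArg Prod.snd heq, congrArg Prod.fst heq⟩
          · rw [if_neg h1, if_neg h2] at heq
            exact Or.inl ⟨congrArg Prod.snd heq, congrArg Prod.fst heq⟩
      rcases hcases with ⟨ha, hb⟩ | ⟨ha, hb⟩
      · obtain ⟨rfl, hor1⟩ := keylem c c' i i' ha
        obtain ⟨rfl, hor2⟩ := keylem c c' j j' hb
        have hcc : c = c' := by
          rcases hor1 with h | h
          · rcases hor2 with h' | h'
            · exact absurd hadjH (hUind _ h _ h')
            · exact h'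
          · exact h
        subst hcc; rfl
      · obtain ⟨rfl, -⟩ := keylem c c' i j' ha
        obtain ⟨rfl, -⟩ := keylem c c' j i' hb
        exact absurd (hij.trans hij') (lt_irrefl _)
    · rintro ⟨a, b⟩ hq
      simp only [edgeFinset', Finset.mem_filter, Finset.mem_univ, true_and] at hq
      obtain ⟨hab, hGadj⟩ := hq
      obtain ⟨c, i, j, hadjH, rfl, rfl⟩ := (hadj _ _).mp hGadj
      rcases lt_or_gt_of_ne hadjH.ne with hij | hij
      · refine ⟨(c, i, j), ?_, ?_⟩
        · simp only [edgeFinset', Finset.mem_product, Finset.mem_filter, Finset.mem_univ, true_and]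
          exact ⟨hij, hadjH⟩
        · simp only [if_pos hab]
      · refine ⟨(c, j, i), ?_, ?_⟩
        · simp only [edgeFinset', Finset.mem_product, Finset.mem_filter, Finset.mem_univ, true_and]
          exact ⟨hij, hadjH.symm⟩
        · have : ¬ φ c j < φ c i := not_lt.mpr hab.le
          simp only [if_neg this]
    · rintro ⟨c, i, j⟩ hz
      by_cases hlt : φ c i < φ c j
      · simp only [if_pos hlt]
      · simp only [if_neg hlt]
        exact hWs _ _
  -- Step B : homDensity G W = ∫ F ^ n
  have stepB : homDensity G W = ∫ u, (F u) ^ n ∂νS := by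
    rw [homDensity]
    simp_rw [prodlem]
    haveI : DecidablePred pV := Classical.decPred _
    have mp2 := measurePreserving_piEquivPiSubtypeProd (fun _ : Fin M => muI) pV
    rw [← (mp2.symm _).integral_comp']
    set e2 := (MeasurableEquiv.piEquivPiSubtypeProd (fun _ : Fin M => ℝ) pV).symm with he2
    -- Fubini
    set Φ : ({v // pV v} → ℝ) × ({v // ¬ pV v} → ℝ) → ℝ :=
      fun z => ∏ c : Fin n, ∏ p ∈ edgeFinset' H, W (e2 z (φ c p.1)) (e2 z (φ c p.2)) with hΦ
    have hΦm : Measurable Φ := by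
      apply Finset.measurable_prod
      intro c _
      apply Finset.measurable_prod
      intro p _
      exact hWm.comp
        ((((measurable_pi_apply _).comp e2.measurable).prodMk
          ((measurable_pi_apply _).comp e2.measurable)))
    have hΦ0 : ∀ z, 0 ≤ Φ z := fun z =>
      Finset.prod_nonneg fun c _ => Finset.prod_nonneg fun p _ => (hWb _ _).1
    have hΦ1 : ∀ z, Φ z ≤ 1 := fun z =>
      Finset.prod_le_one (fun c _ => Finset.prod_nonneg fun p _ => (hWb _ _).1)
        (fun c _ => Finset.prod_le_one (fun p _ => (hWb _ _).1) (fun p _ => (hWb _ _).2))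
    rw [MeasureTheory.integral_prod _
      (ReflectionAux.integrable_bdd hΦm.aestronglyMeasurable hΦ0 hΦ1)]
    -- inner integral computation
    have inner_eq : ∀ u' : {v // pV v} → ℝ,
        (∫ w, Φ (u', w) ∂(Measure.pi fun _ : {v // ¬ pV v} => muI))
          = (F (fun i => u' (σ i))) ^ n := by
      intro u'
      have mpτ := measurePreserving_piCongrLeft (fun _ : {v // ¬ pV v} => muI) τ
      rw [← mpτ.integral_comp']
      have mpc := ReflectionAux.measurePreserving_curry
        (ι := Fin n) (κ := {i : Fin m // i ∉ U}) (α := ℝ) muI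
      rw [← (mpc.symm _).integral_comp']
      have hptw : ∀ x : Fin n → {i : Fin m // i ∉ U} → ℝ,
          Φ (u', (MeasurableEquiv.piCongrLeft (fun _ => ℝ) τ)
            ((ReflectionAux.curryMEquiv (Fin n) {i : Fin m // i ∉ U} ℝ).symm x))
            = ∏ c : Fin n, ψ (fun i => u' (σ i), x c) := by
        intro x
        have hcoord : ∀ (c : Fin n) (i : Fin m),
            e2 (u', (MeasurableEquiv.piCongrLeft (fun _ => ℝ) τ)
              ((ReflectionAux.curryMEquiv (Fin n) {i : Fin m // i ∉ U} ℝ).symm x)) (φ c i)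
              = glue (fun s => u' (σ s)) (x c) i := by
          intro c i
          by_cases h : i ∈ U
          · have hpv : pV (φ c i) := (pV_phi c i).mpr h
            have h1 : e2 (u', (MeasurableEquiv.piCongrLeft (fun _ => ℝ) τ)
                ((ReflectionAux.curryMEquiv (Fin n) {i : Fin m // i ∉ U} ℝ).symm x)) (φ c i)
                = u' ⟨φ c i, hpv⟩ := by
              simp only [he2, MeasurableEquiv.piEquivPiSubtypeProd,
                MeasurableEquiv.symm, MeasurableEquiv.coe_mk, Equiv.symm_symm]
              rw [Equiv.piEquivPiSubtypeProd_symm_apply]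
              simp only [dif_pos hpv]
            rw [h1]
            have h2 : (⟨φ c i, hpv⟩ : {v // pV v}) = σ ⟨i, h⟩ := by
              apply Subtype.ext
              rw [hσval]
              exact hagree c c0 i h
            rw [h2]
            simp only [hglue, dif_pos h]
          · have hpv : ¬ pV (φ c i) := fun hp => h ((pV_phi c i).mp hp)
            have h1 : e2 (u', (MeasurableEquiv.piCongrLeft (fun _ => ℝ) τ)
                ((ReflectionAux.curryMEquiv (Fin n) {i : Fin m // i ∉ U} ℝ).symm x)) (φ c i)
                = ((MeasurableEquiv.piCongrLeft (fun _ => ℝ) τ)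
                  ((ReflectionAux.curryMEquiv (Fin n) {i : Fin m // i ∉ U} ℝ).symm x))
                  ⟨φ c i, hpv⟩ := by
              simp only [he2, MeasurableEquiv.piEquivPiSubtypeProd,
                MeasurableEquiv.symm, MeasurableEquiv.coe_mk, Equiv.symm_symm]
              rw [Equiv.piEquivPiSubtypeProd_symm_apply]
              simp only [dif_neg hpv]
            rw [h1]
            have h2 : (⟨φ c i, hpv⟩ : {v // ¬ pV v}) = τ (c, ⟨i, h⟩) := by
              apply Subtype.ext
              rw [hτval]
            rw [h2, MeasurableEquiv.coe_piCongrLeft, Equiv.piCongrLeft_apply_apply]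
            simp only [hglue, dif_neg h]
            rfl
        simp only [hΦ, hψ]
        apply Finset.prod_congr rfl
        intro c _
        apply Finset.prod_congr rfl
        intro p _
        rw [hcoord c p.1, hcoord c p.2]
      simp_rw [hptw]
      rw [ReflectionAux.integral_pi_pow (E := {i : Fin m // i ∉ U} → ℝ) νT n
        (fun t => ψ (fun i => u' (σ i), t))]
    simp_rw [inner_eq]
    -- change of variables along σ
    have mpσ := measurePreserving_piCongrLeft (fun _ : {v // pV v} => muI) σ
    rw [← mpσ.integral_comp']
    apply integral_congr_ae
    apply Filter.Eventually.of_forall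
    intro u
    have harg : (fun i => (MeasurableEquiv.piCongrLeft (fun _ : {v // pV v} => ℝ) σ) u (σ i)) = u := by
      funext i
      rw [MeasurableEquiv.coe_piCongrLeft, Equiv.piCongrLeft_apply_apply]
    dsimp only
    rw [harg]
  -- Jensen's inequality
  rw [stepA, stepB]
  have hconv : ConvexOn ℝ (Set.Icc (0:ℝ) 1) (fun t : ℝ => t ^ n) :=
    (convexOn_pow n).subset Set.Icc_subset_Ici_self (convex_Icc 0 1)
  have hFi : Integrable F νS :=
    ReflectionAux.integrable_bdd hFm.aestronglyMeasurable hF0 hF1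
  have hFni : Integrable ((fun t : ℝ => t ^ n) ∘ F) νS := by
    apply ReflectionAux.integrable_bdd
    · exact ((continuous_pow n).comp_stronglyMeasurable hFm).aestronglyMeasurable
    · exact fun u => pow_nonneg (hF0 u) n
    · exact fun u => pow_le_one₀ (hF0 u) (hF1 u)
  exact hconv.map_integral_le ((continuous_pow n).continuousOn) isClosed_Icc
    (Filter.Eventually.of_forall fun u => ⟨hF0 u, hF1 u⟩) hFi hFni
end
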